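/- Let p₁,...,p_k > 0, let Σ₁,...,Σ_k ∈ ℝ^{d×d} be positive semidefinite with tr(Σ_i Σ_j) = 0 for i ≠ j, let M_{*,i} = u_i v_iᵀ with v_i ∈ range(Σ_i), and set M_* = Σᵢ M_{*,i}, Σ = Σᵢ p_i Σ_i. Then for any matrix M ∈ ℝ^{m×d}, Σᵢ p_i tr((M_{*,i} − M) Σ_i (M_{*,i} − M)ᵀ) = tr((M_* − M) Σ (M_* − M)ᵀ) = ‖(M_* − M) Σ^{1/2}‖_F². -/

import Mathlib

open Matrix

/-- Frobenius norm squared of a real matrix. -/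
noncomputable def frobSq {m d : ℕ} (A : Matrix (Fin m) (Fin d) ℝ) : ℝ :=
  ∑ i, ∑ j, (A i j) ^ 2

lemma frob_trace {m d : ℕ} (A : Matrix (Fin m) (Fin d) ℝ) :
    (A * Aᵀ).trace = ∑ i, ∑ j, (A i j) ^ 2 := by
  simp [Matrix.trace, Matrix.mul_apply, Matrix.diag, sq]

lemma eq_zero_of_trace_mul_transpose {m d : ℕ} (C : Matrix (Fin m) (Fin d) ℝ)
    (h : (C * Cᵀ).trace = 0) : C = 0 := by
  rw [frob_trace] at h
  ext i j
  have h1 : ∀ i ∈ Finset.univ, (0:ℝ) ≤ ∑ j, (C i j) ^ 2 :=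
    fun i _ => Finset.sum_nonneg fun j _ => sq_nonneg _
  have h2 := (Finset.sum_eq_zero_iff_of_nonneg h1).mp h i (Finset.mem_univ i)
  have h3 := (Finset.sum_eq_zero_iff_of_nonneg
    (fun j _ => sq_nonneg (C i j))).mp h2 j (Finset.mem_univ j)
  simpa using sq_eq_zero_iff.mp h3

section
open scoped MatrixOrder

lemma psd_mul_eq_zero {n : ℕ} {A B : Matrix (Fin n) (Fin n) ℝ}
    (hA : A.PosSemidef) (hB : B.PosSemidef) (h : (A * B).trace = 0) :
    A * B = 0 := by
  set a := CFC.sqrt A with ha_def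
  set b := CFC.sqrt B with hb_def
  have ha : a * a = A := CFC.sqrt_mul_sqrt_self A hA.nonneg
  have hb : b * b = B := CFC.sqrt_mul_sqrt_self B hB.nonneg
  have hat : aᵀ = a := by
    have := (CFC.sqrt_nonneg A).posSemidef.isHermitian
    rwa [Matrix.IsHermitian, conjTranspose_eq_transpose_of_trivial] at this
  have hbt : bᵀ = b := by
    have := (CFC.sqrt_nonneg B).posSemidef.isHermitian
    rwa [Matrix.IsHermitian, conjTranspose_eq_transpose_of_trivial] at this
  have key : ((b * a) * (b * a)ᵀ).trace = 0 := by
    have : (b * a) * (b * a)ᵀ = b * (a * a) * b := by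
      rw [transpose_mul, hat, hbt]; simp only [mul_assoc]
    rw [this, ha]
    calc (b * A * b).trace = (A * b * b).trace := by
          rw [Matrix.trace_mul_cycle, Matrix.trace_mul_cycle]
      _ = (A * B).trace := by rw [mul_assoc, hb]
      _ = 0 := h
  have hba : b * a = 0 := eq_zero_of_trace_mul_transpose _ key
  have hab : a * b = 0 := by
    have := congrArg Matrix.transpose hba
    rwa [transpose_mul, hat, hbt, transpose_zero] at this
  calc A * B = a * (a * b) * b := by rw [← ha, ← hb]; simp only [mul_assoc]
    _ = 0 := by rw [hab, mul_zero, zero_mul]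

end

/-- With orthogonal tasks, the weighted multi-task quadratic objective collapses to a
single-target objective: `∑ i, p i * tr((Mᵢ − M) Σᵢ (Mᵢ − M)ᵀ) = tr((M⋆ − M) Σ (M⋆ − M)ᵀ)
= ‖(M⋆ − M) Σ^{1/2}‖_F²`, where `Σ^{1/2}` is the PSD square root `R` of `Σ`. -/
theorem multitask_objective_collapse {d m k : ℕ}
    (p : Fin k → ℝ) (hp : ∀ i, 0 < p i)
    (S : Fin k → Matrix (Fin d) (Fin d) ℝ)
    (hpsd : ∀ i, (S i).PosSemidef)
    (htr : ∀ i j, i ≠ j → (S i * S j).trace = 0)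
    (u : Fin k → Fin m → ℝ) (v : Fin k → Fin d → ℝ)
    (hv : ∀ i, v i ∈ LinearMap.range (S i).mulVecLin)
    (R : Matrix (Fin d) (Fin d) ℝ) (hR : R.PosSemidef)
    (hRsq : R * R = ∑ i, p i • S i)
    (M : Matrix (Fin m) (Fin d) ℝ) :
    (∑ i, p i * ((vecMulVec (u i) (v i) - M) * S i *
        (vecMulVec (u i) (v i) - M)ᵀ).trace
      = (((∑ i, vecMulVec (u i) (v i)) - M) * (∑ i, p i • S i) *
          ((∑ i, vecMulVec (u i) (v i)) - M)ᵀ).trace) ∧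
    ((((∑ i, vecMulVec (u i) (v i)) - M) * (∑ i, p i • S i) *
        ((∑ i, vecMulVec (u i) (v i)) - M)ᵀ).trace
      = frobSq (((∑ i, vecMulVec (u i) (v i)) - M) * R)) := by
  set A : Fin k → Matrix (Fin m) (Fin d) ℝ := fun i => vecMulVec (u i) (v i) with hA_def
  set B : Matrix (Fin m) (Fin d) ℝ := (∑ i, A i) - M with hB_def
  have hSsymm : ∀ i, (S i)ᵀ = S i := by
    intro i
    have := (hpsd i).isHermitian
    rwa [Matrix.IsHermitian, conjTranspose_eq_transpose_of_trivial] at this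
  have hSS : ∀ i j, i ≠ j → S i * S j = 0 := fun i j hij =>
    psd_mul_eq_zero (hpsd i) (hpsd j) (htr i j hij)
  -- A j * S i = 0 for j ≠ i
  have hAS : ∀ i j, j ≠ i → A j * S i = 0 := by
    intro i j hji
    obtain ⟨w, hw⟩ := hv j
    have hv0 : (S i) *ᵥ (v j) = 0 := by
      rw [← hw]
      show (S i) *ᵥ ((S j) *ᵥ w) = 0
      rw [mulVec_mulVec, hSS i j (fun h => hji h.symm), zero_mulVec]
    ext a b
    simp only [hA_def, Matrix.mul_apply, vecMulVec_apply, Matrix.zero_apply]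
    calc ∑ c, (u j a * v j c) * S i c b
        = u j a * ∑ c, S i b c * v j c := by
          rw [Finset.mul_sum]
          refine Finset.sum_congr rfl fun c _ => ?_
          have hsym : S i c b = S i b c := congrFun (congrFun (hSsymm i) b) c
          rw [hsym]; ring
      _ = u j a * ((S i) *ᵥ (v j)) b := rfl
      _ = 0 := by rw [hv0]; simp
  -- B * S i = (A i - M) * S i
  have hBS : ∀ i, B * S i = (A i - M) * S i := by
    intro i
    rw [hB_def, Matrix.sub_mul, Matrix.sub_mul, Matrix.sum_mul]
    congr 1
    rw [Finset.sum_eq_single i (fun j _ hji => hAS i j hji) (by simp)]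
  have hSB : ∀ i, S i * Bᵀ = S i * (A i - M)ᵀ := by
    intro i
    have := congrArg Matrix.transpose (hBS i)
    rwa [transpose_mul, transpose_mul, hSsymm i] at this
  have hkey : ∀ i, B * S i * Bᵀ = (A i - M) * S i * (A i - M)ᵀ := by
    intro i
    rw [Matrix.mul_assoc, hSB i, ← Matrix.mul_assoc, hBS i, Matrix.mul_assoc]
  constructor
  · rw [Matrix.mul_sum, Matrix.sum_mul, Matrix.trace_sum]
    refine Finset.sum_congr rfl fun i _ => ?_
    rw [Matrix.mul_smul, Matrix.smul_mul, Matrix.trace_smul, smul_eq_mul, hkey i]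
  · rw [← hRsq]
    have hRt : Rᵀ = R := by
      have := hR.isHermitian
      rwa [Matrix.IsHermitian, conjTranspose_eq_transpose_of_trivial] at this
    have : B * (R * R) * Bᵀ = (B * R) * (B * R)ᵀ := by
      rw [transpose_mul, hRt]; simp only [Matrix.mul_assoc]
    rw [this, frob_trace]
    rfl
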